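/- Let d ≥ 1, G = (ℤ/2)^d with Hamming distance δ, and f : ℤ₊ → ℝ₊ with (−1)^m (Δ^m f)(x) > 0 for all m ≥ 0 and x ≥ 1. For characters χ ∈ {−1,1}^d define λ(χ) = ∑_{g≠0} f(δ(g,0)) ∏_i χ_i^{g_i}. If χ and χ̃ differ only in the first coordinate with χ₁ = 1, χ̃₁ = −1, then λ(χ) − λ(χ̃) = 2 ∑_{l=0}^{q} binomial(q,l) (−1)^{d−1−q} (Δ^{d−1−q} f)(l+1) > 0, where q is the number of ones among χ₂,…,χ_d. -/

import Mathlib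

open Finset

lemma alt_sum_fwdDiff (f : ℕ → ℝ) (p x : ℕ) :
    ∑ b ∈ Finset.range (p + 1), (-1 : ℝ) ^ b * (p.choose b : ℝ) * f (x + b)
      = (-1 : ℝ) ^ p * ((fun F : ℕ → ℝ => fun y => F (y + 1) - F y)^[p] f) x := by
  have h : (fun F : ℕ → ℝ => fun y => F (y + 1) - F y) = fwdDiff (1 : ℕ) := rfl
  rw [h, fwdDiff_iter_eq_sum_shift, Finset.mul_sum]
  refine Finset.sum_congr rfl fun b hb => ?_
  rw [Finset.mem_range, Nat.lt_succ_iff] at hb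
  have hs : (-1 : ℝ) ^ p * (-1 : ℝ) ^ (p - b) = (-1 : ℝ) ^ b := by
    rw [← pow_add]
    have h2 : p + (p - b) = 2 * (p - b) + b := by omega
    rw [h2, pow_add, pow_mul, neg_one_sq, one_pow, one_mul]
  rw [zsmul_eq_mul, smul_eq_mul, mul_one]
  push_cast
  rw [← hs]; ring

theorem hypercube_eigenvalue_flip (d : ℕ) (hd : 1 ≤ d)
    (f : ℕ → ℝ) (hfpos : ∀ x : ℕ, 1 ≤ x → 0 < f x)
    (hf : ∀ m x : ℕ, 1 ≤ x →
      0 < (-1 : ℝ) ^ m * ((fun F : ℕ → ℝ => fun y => F (y + 1) - F y)^[m] f) x)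
    (χ χ' : Fin d → ℝ)
    (hχ : ∀ i, χ i = 1 ∨ χ i = -1)
    (h0 : χ ⟨0, hd⟩ = 1) (h0' : χ' ⟨0, hd⟩ = -1)
    (hrest : ∀ i : Fin d, i ≠ ⟨0, hd⟩ → χ' i = χ i) :
    let δ : (Fin d → ZMod 2) → ℕ := fun g => (Finset.univ.filter (fun i => g i ≠ 0)).card
    let lam : (Fin d → ℝ) → ℝ := fun ψ =>
      ∑ g ∈ Finset.univ.erase (0 : Fin d → ZMod 2), f (δ g) * ∏ i, (ψ i) ^ (g i).val
    let q : ℕ := (Finset.univ.filter (fun i : Fin d => i ≠ ⟨0, hd⟩ ∧ χ i = 1)).card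
    lam χ - lam χ' = 2 * ∑ l ∈ Finset.range (q + 1), (q.choose l : ℝ) * (-1 : ℝ) ^ (d - 1 - q) *
        ((fun F : ℕ → ℝ => fun y => F (y + 1) - F y)^[d - 1 - q] f) (l + 1) ∧
      0 < lam χ - lam χ' := by
  intro δ lam q
  classical
  set i0 : Fin d := ⟨0, hd⟩ with hi0def
  have hz1 : ∀ a : ZMod 2, a ≠ 0 → a = 1 := by decide
  -- Step A : lam as a sum over nonempty subsets
  have hconv : ∀ ψ : Fin d → ℝ, lam ψ =
      ∑ T ∈ (Finset.univ : Finset (Fin d)).powerset.erase ∅, f T.card * ∏ i ∈ T, ψ i := by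
    intro ψ
    simp only [lam]
    refine Finset.sum_nbij' (fun g => Finset.univ.filter (fun i => g i ≠ 0))
      (fun T => fun i => if i ∈ T then (1 : ZMod 2) else 0) ?_ ?_ ?_ ?_ ?_
    · intro g hg
      rw [Finset.mem_erase] at hg ⊢
      refine ⟨?_, Finset.mem_powerset.2 (Finset.filter_subset _ _)⟩
      intro hemp
      apply hg.1
      funext i
      show g i = 0
      by_contra hgi
      have hmem : i ∈ Finset.univ.filter (fun i => g i ≠ 0) := by
        simp [hgi]
      have hemp' : Finset.univ.filter (fun i => g i ≠ 0) = ∅ := hemp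
      rw [hemp'] at hmem
      exact absurd hmem (Finset.notMem_empty i)
    · intro T hT
      rw [Finset.mem_erase] at hT
      rw [Finset.mem_erase]
      refine ⟨?_, Finset.mem_univ _⟩
      obtain ⟨i, hi⟩ := Finset.nonempty_iff_ne_empty.2 hT.1
      intro h0f
      have := congrFun h0f i
      simp [hi] at this
    · intro g hg
      funext i
      by_cases hgi : g i = 0
      · simp [Finset.mem_filter, hgi]
      · simp only [Finset.mem_filter, Finset.mem_univ, true_and, ne_eq, hgi,
          not_false_iff, if_true]
        exact (hz1 _ hgi).symm
    · intro T hT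
      ext i
      simp only [Finset.mem_filter, Finset.mem_univ, true_and, ne_eq]
      by_cases hi : i ∈ T <;> simp [hi]
    · intro g hg
      congr 1
      have ha : ∀ i ∈ Finset.univ.filter (fun i => g i ≠ 0), ψ i ^ (g i).val = ψ i := by
        intro i hi
        rw [Finset.mem_filter] at hi
        rw [hz1 _ hi.2]
        have hv : (1 : ZMod 2).val = 1 := rfl
        rw [hv, pow_one]
      have hb : ∏ i ∈ Finset.univ.filter (fun i => ¬ g i ≠ 0), ψ i ^ (g i).val = 1 := by
        apply Finset.prod_eq_one
        intro i hi
        rw [Finset.mem_filter] at hi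
        have : g i = 0 := not_not.1 hi.2
        simp [this]
      calc ∏ i, ψ i ^ (g i).val
          = (∏ i ∈ Finset.univ.filter (fun i => g i ≠ 0), ψ i ^ (g i).val) *
            ∏ i ∈ Finset.univ.filter (fun i => ¬ g i ≠ 0), ψ i ^ (g i).val :=
            (Finset.prod_filter_mul_prod_filter_not _ _ _).symm
        _ = ∏ i ∈ Finset.univ.filter (fun i => g i ≠ 0), ψ i := by
            rw [hb, mul_one]; exact Finset.prod_congr rfl ha
  -- setup
  set E : Finset (Fin d) := Finset.univ.erase i0 with hEdef
  set A : Finset (Fin d) := E.filter (fun i => χ i = 1) with hAdef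
  set B : Finset (Fin d) := E.filter (fun i => χ i = -1) with hBdef
  have hi0E : i0 ∉ E := Finset.notMem_erase _ _
  have hqA : q = A.card := by
    simp only [q, hAdef, hEdef]
    congr 1
    ext i
    simp only [Finset.mem_filter, Finset.mem_erase, Finset.mem_univ, true_and, and_true, hi0def]
  have hE : E.card = d - 1 := by
    rw [hEdef, Finset.card_erase_of_mem (Finset.mem_univ _), Finset.card_univ, Fintype.card_fin]
  have hsplit : ∀ U : Finset (Fin d),
      (U.filter (fun i => χ i = 1)).card + (U.filter (fun i => χ i = -1)).card = U.card := by
    intro U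
    have h2 : U.filter (fun i => χ i = -1) = U.filter (fun i => ¬ χ i = 1) := by
      apply Finset.filter_congr
      intro i _
      rcases hχ i with h | h <;> rw [h] <;> norm_num
    rw [h2, Finset.card_filter_add_card_filter_not]
  have hpB : B.card = d - 1 - q := by
    have := hsplit E
    rw [← hAdef, ← hBdef] at this
    omega
  -- Step B
  have step1 : lam χ - lam χ' =
      ∑ U ∈ E.powerset, 2 * f (U.card + 1) * ∏ i ∈ U, χ i := by
    have hprodeq : ∀ U : Finset (Fin d), U ⊆ E → ∏ i ∈ U, χ' i = ∏ i ∈ U, χ i := by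
      intro U hU
      refine Finset.prod_congr rfl fun i hi => hrest i ?_
      exact (Finset.mem_erase.1 (hU hi)).1
    rw [hconv χ, hconv χ', ← Finset.sum_sub_distrib,
      Finset.sum_erase_eq_sub (Finset.empty_mem_powerset _)]
    simp only [Finset.prod_empty, Finset.card_empty, mul_one, sub_self, sub_zero]
    rw [show (Finset.univ : Finset (Fin d)) = insert i0 E from
      (Finset.insert_erase (Finset.mem_univ i0)).symm]
    rw [Finset.sum_powerset_insert hi0E]
    have hzero : ∀ U ∈ E.powerset,
        f U.card * ∏ i ∈ U, χ i - f U.card * ∏ i ∈ U, χ' i = 0 := by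
      intro U hU
      rw [hprodeq U (Finset.mem_powerset.1 hU), sub_self]
    rw [Finset.sum_congr rfl hzero, Finset.sum_const_zero, zero_add]
    refine Finset.sum_congr rfl fun U hU => ?_
    have hiU : i0 ∉ U := fun h => hi0E (Finset.mem_powerset.1 hU h)
    rw [Finset.card_insert_of_notMem hiU, Finset.prod_insert hiU, Finset.prod_insert hiU,
      h0, h0', hprodeq U (Finset.mem_powerset.1 hU)]
    ring
  have step2 : ∑ U ∈ E.powerset, 2 * f (U.card + 1) * ∏ i ∈ U, χ i
      = ∑ ST ∈ A.powerset ×ˢ B.powerset,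
          2 * f (ST.1.card + ST.2.card + 1) * (-1 : ℝ) ^ ST.2.card := by
    refine Finset.sum_nbij'
      (fun U => (U.filter (fun i => χ i = 1), U.filter (fun i => χ i = -1)))
      (fun ST => ST.1 ∪ ST.2) ?_ ?_ ?_ ?_ ?_
    · intro U hU
      rw [Finset.mem_product]
      exact ⟨Finset.mem_powerset.2 (Finset.filter_subset_filter _ (Finset.mem_powerset.1 hU)),
        Finset.mem_powerset.2 (Finset.filter_subset_filter _ (Finset.mem_powerset.1 hU))⟩
    · intro ST hST
      rw [Finset.mem_product] at hST
      rw [Finset.mem_powerset]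
      exact Finset.union_subset
        ((Finset.mem_powerset.1 hST.1).trans (Finset.filter_subset _ _))
        ((Finset.mem_powerset.1 hST.2).trans (Finset.filter_subset _ _))
    · intro U hU
      ext i
      simp only [Finset.mem_union, Finset.mem_filter]
      constructor
      · rintro (⟨h, _⟩ | ⟨h, _⟩) <;> exact h
      · intro h
        rcases hχ i with h1 | h1
        · exact Or.inl ⟨h, h1⟩
        · exact Or.inr ⟨h, h1⟩
    · intro ST hST
      rw [Finset.mem_product, Finset.mem_powerset, Finset.mem_powerset] at hST
      have hSA : ∀ i ∈ ST.1, χ i = 1 := fun i hi => (Finset.mem_filter.1 (hST.1 hi)).2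
      have hTB : ∀ i ∈ ST.2, χ i = -1 := fun i hi => (Finset.mem_filter.1 (hST.2 hi)).2
      have e1 : (ST.1 ∪ ST.2).filter (fun i => χ i = 1) = ST.1 := by
        ext i
        simp only [Finset.mem_filter, Finset.mem_union]
        constructor
        · rintro ⟨h | h, h2⟩
          · exact h
          · exfalso; rw [hTB i h] at h2; norm_num at h2
        · intro h; exact ⟨Or.inl h, hSA i h⟩
      have e2 : (ST.1 ∪ ST.2).filter (fun i => χ i = -1) = ST.2 := by
        ext i
        simp only [Finset.mem_filter, Finset.mem_union]
        constructor
        · rintro ⟨h | h, h2⟩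
          · exfalso; rw [hSA i h] at h2; norm_num at h2
          · exact h
        · intro h; exact ⟨Or.inr h, hTB i h⟩
      simp only [e1, e2]
    · intro U hU
      have hcard := hsplit U
      have hprod : ∏ i ∈ U, χ i = (-1 : ℝ) ^ (U.filter (fun i => χ i = -1)).card := by
        rw [← Finset.prod_filter_mul_prod_filter_not U (fun i => χ i = 1)]
        have hone : ∏ i ∈ U.filter (fun i => χ i = 1), χ i = 1 :=
          Finset.prod_eq_one fun i hi => (Finset.mem_filter.1 hi).2
        have h2 : U.filter (fun i => ¬ χ i = 1) = U.filter (fun i => χ i = -1) := by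
          apply Finset.filter_congr
          intro i _
          rcases hχ i with h | h <;> rw [h] <;> norm_num
        rw [hone, one_mul, h2,
          Finset.prod_congr rfl (fun i hi => (Finset.mem_filter.1 hi).2), Finset.prod_const]
      simp only [hprod, ← hcard]
  have step3 : ∑ ST ∈ A.powerset ×ˢ B.powerset,
        2 * f (ST.1.card + ST.2.card + 1) * (-1 : ℝ) ^ ST.2.card
      = 2 * ∑ l ∈ Finset.range (q + 1), (q.choose l : ℝ) * (-1 : ℝ) ^ (d - 1 - q) *
          ((fun F : ℕ → ℝ => fun y => F (y + 1) - F y)^[d - 1 - q] f) (l + 1) := by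
    rw [Finset.sum_product]
    calc ∑ S ∈ A.powerset, ∑ T ∈ B.powerset, 2 * f (S.card + T.card + 1) * (-1 : ℝ) ^ T.card
        = ∑ S ∈ A.powerset, 2 * ((-1 : ℝ) ^ B.card *
            ((fun F : ℕ → ℝ => fun y => F (y + 1) - F y)^[B.card] f) (S.card + 1)) := by
          refine Finset.sum_congr rfl fun S _ => ?_
          rw [show (∑ T ∈ B.powerset, 2 * f (S.card + T.card + 1) * (-1 : ℝ) ^ T.card)
              = ∑ b ∈ Finset.range (B.card + 1),
                  B.card.choose b • (2 * f (S.card + b + 1) * (-1 : ℝ) ^ b)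
              from Finset.sum_powerset_apply_card
                (fun b => 2 * f (S.card + b + 1) * (-1 : ℝ) ^ b)]
          rw [← alt_sum_fwdDiff f B.card (S.card + 1), Finset.mul_sum]
          refine Finset.sum_congr rfl fun b hb => ?_
          rw [nsmul_eq_mul, show S.card + 1 + b = S.card + b + 1 from by omega]
          ring
      _ = ∑ a ∈ Finset.range (A.card + 1), A.card.choose a • (2 * ((-1 : ℝ) ^ B.card *
            ((fun F : ℕ → ℝ => fun y => F (y + 1) - F y)^[B.card] f) (a + 1))) :=
          Finset.sum_powerset_apply_card (fun a => 2 * ((-1 : ℝ) ^ B.card *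
            ((fun F : ℕ → ℝ => fun y => F (y + 1) - F y)^[B.card] f) (a + 1)))
      _ = 2 * ∑ l ∈ Finset.range (q + 1), (q.choose l : ℝ) * (-1 : ℝ) ^ (d - 1 - q) *
            ((fun F : ℕ → ℝ => fun y => F (y + 1) - F y)^[d - 1 - q] f) (l + 1) := by
          rw [hpB, ← hqA, Finset.mul_sum]
          refine Finset.sum_congr rfl fun l _ => ?_
          rw [nsmul_eq_mul]
          ring
  have key : lam χ - lam χ' = 2 * ∑ l ∈ Finset.range (q + 1),
      (q.choose l : ℝ) * (-1 : ℝ) ^ (d - 1 - q) *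
      ((fun F : ℕ → ℝ => fun y => F (y + 1) - F y)^[d - 1 - q] f) (l + 1) := by
    rw [step1, step2, step3]
  refine ⟨key, ?_⟩
  rw [key]
  have hpos : 0 < ∑ l ∈ Finset.range (q + 1), (q.choose l : ℝ) * (-1 : ℝ) ^ (d - 1 - q) *
      ((fun F : ℕ → ℝ => fun y => F (y + 1) - F y)^[d - 1 - q] f) (l + 1) := by
    apply Finset.sum_pos
    · intro l hl
      rw [Finset.mem_range, Nat.lt_succ_iff] at hl
      have h1 := hf (d - 1 - q) (l + 1) (by omega)
      have h2 : (0 : ℝ) < q.choose l := by exact_mod_cast Nat.choose_pos hl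
      rw [mul_assoc]
      exact mul_pos h2 h1
    · exact ⟨0, Finset.mem_range.2 (Nat.succ_pos q)⟩
  linarith
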